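/- Under the hypotheses of the previous statement (A = B, C₁(M̄u,u) ≤ (Mu,u) ≤ (M̄u,u) for all u with C₁ ∈ (0,1), τ > 0), every eigenvalue of the preconditioned matrix B̃⁻¹𝒜, where 𝒜 = [[τA, M],[M, −τB]] and B̃ = [[τA, M],[M̄, −τB]], lies in the real interval (C₁, 1]. -/

import Mathlib

open Matrix

section aux
variable {n : ℕ}

private lemma mapc_smul (τ : ℝ) (A : Matrix (Fin n) (Fin n) ℝ) :
    (τ • A).map ((↑) : ℝ → ℂ) = (τ : ℂ) • A.map ((↑) : ℝ → ℂ) := by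
  ext i j; simp

private lemma mapc_neg (A : Matrix (Fin n) (Fin n) ℝ) :
    (-A).map ((↑) : ℝ → ℂ) = -(A.map ((↑) : ℝ → ℂ)) := by
  ext i j; simp

private lemma mapc_CT (S : Matrix (Fin n) (Fin n) ℝ) (hS : Sᵀ = S) :
    (S.map ((↑) : ℝ → ℂ))ᴴ = S.map ((↑) : ℝ → ℂ) := by
  ext i j
  simp only [conjTranspose_apply, Matrix.map_apply, Complex.star_def, Complex.conj_ofReal]
  exact congrArg _ (congrFun (congrFun hS i) j)

private lemma star_dot_swap (S : Matrix (Fin n) (Fin n) ℝ) (hS : Sᵀ = S) (x y : Fin n → ℂ) :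
    star x ⬝ᵥ (S.map ((↑) : ℝ → ℂ) *ᵥ y) = star (S.map ((↑) : ℝ → ℂ) *ᵥ x) ⬝ᵥ y := by
  rw [star_mulVec, mapc_CT S hS, ← dotProduct_mulVec]

private lemma swap_dot (S : Matrix (Fin n) (Fin n) ℝ) (hS : Sᵀ = S) (a b : Fin n → ℝ) :
    S *ᵥ a ⬝ᵥ b = S *ᵥ b ⬝ᵥ a := by
  rw [dotProduct_comm, dotProduct_mulVec, ← mulVec_transpose, hS]

private lemma quad_decomp (S : Matrix (Fin n) (Fin n) ℝ) (hS : Sᵀ = S) (x : Fin n → ℂ) :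
    star x ⬝ᵥ (S.map ((↑) : ℝ → ℂ) *ᵥ x) =
      ((S *ᵥ (fun i => (x i).re) ⬝ᵥ (fun i => (x i).re)
        + S *ᵥ (fun i => (x i).im) ⬝ᵥ (fun i => (x i).im) : ℝ) : ℂ) := by
  have hswap : ∀ a b : Fin n → ℝ, S *ᵥ a ⬝ᵥ b = S *ᵥ b ⬝ᵥ a := swap_dot S hS
  apply Complex.ext
  · simp only [dotProduct, mulVec, Pi.star_apply, Complex.re_sum, Complex.mul_re,
      Complex.im_sum, Complex.ofReal_re, Complex.ofReal_im, Complex.star_def,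
      Complex.conj_re, Complex.conj_im, Matrix.map_apply, Complex.mul_im, mul_zero,
      zero_mul, add_zero, sub_zero, zero_add, mul_one]
    rw [← Finset.sum_add_distrib]
    refine Finset.sum_congr rfl fun i _ => ?_
    ring
  · simp only [dotProduct, mulVec, Pi.star_apply, Complex.im_sum, Complex.mul_im,
      Complex.mul_re, Complex.ofReal_re, Complex.ofReal_im, Complex.star_def,
      Complex.conj_re, Complex.conj_im, Matrix.map_apply, mul_zero,
      zero_mul, add_zero, sub_zero, zero_add, neg_mul, neg_neg, Complex.re_sum,
      ← sub_eq_add_neg, Finset.sum_sub_distrib]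
    rw [sub_eq_zero]
    have key := hswap (fun i => (x i).im) (fun i => (x i).re)
    simp only [dotProduct, mulVec] at key
    simpa [mul_comm] using key

private lemma rquad_nonneg {S : Matrix (Fin n) (Fin n) ℝ} (hS : S.PosSemidef)
    (u : Fin n → ℝ) : 0 ≤ S *ᵥ u ⬝ᵥ u := by
  have := hS.dotProduct_mulVec_nonneg u
  simpa [dotProduct_comm] using this

private lemma rquad_pos {S : Matrix (Fin n) (Fin n) ℝ} (hS : S.PosDef)
    {u : Fin n → ℝ} (hu : u ≠ 0) : 0 < S *ᵥ u ⬝ᵥ u := by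
  have := hS.dotProduct_mulVec_pos hu
  simpa [dotProduct_comm] using this

private lemma cquad_pos {S : Matrix (Fin n) (Fin n) ℝ} (hS : S.PosDef)
    {x : Fin n → ℂ} (hx : x ≠ 0) :
    0 < S *ᵥ (fun i => (x i).re) ⬝ᵥ (fun i => (x i).re)
        + S *ᵥ (fun i => (x i).im) ⬝ᵥ (fun i => (x i).im) := by
  have h : (fun i => (x i).re) ≠ 0 ∨ (fun i => (x i).im) ≠ 0 := by
    by_contra h
    push_neg at h
    apply hx
    funext i
    exact Complex.ext (congrFun h.1 i) (congrFun h.2 i)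
  rcases h with h | h
  · exact add_pos_of_pos_of_nonneg (rquad_pos hS h) (rquad_nonneg hS.posSemidef _)
  · exact add_pos_of_nonneg_of_pos (rquad_nonneg hS.posSemidef _) (rquad_pos hS h)

end aux

/-- Spectrum of the one-sided mass-lumping preconditioned matrix `B̃⁻¹𝒜`
(case `A = B`) lies in the real interval `(C₁, 1]`. -/
theorem stmt_5 {n : ℕ} (A B M Mbar : Matrix (Fin n) (Fin n) ℝ)
    (hA : A.PosDef) (hB : B.PosDef) (hAB : A = B)
    (hM : M.PosDef) (hMbar : Mbar.PosDef) (hMbarDiag : Mbar.IsDiag)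
    (C₁ : ℝ) (hC₁ : C₁ ∈ Set.Ioo (0 : ℝ) 1)
    (hlow : ∀ u : Fin n → ℝ, C₁ * (Mbar.mulVec u ⬝ᵥ u) ≤ M.mulVec u ⬝ᵥ u)
    (hup : ∀ u : Fin n → ℝ, M.mulVec u ⬝ᵥ u ≤ Mbar.mulVec u ⬝ᵥ u)
    (τ : ℝ) (hτ : 0 < τ)
    (𝒜 Btilde : Matrix (Fin n ⊕ Fin n) (Fin n ⊕ Fin n) ℝ)
    (h𝒜 : 𝒜 = Matrix.fromBlocks (τ • A) M M (-(τ • B)))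
    (hBtilde : Btilde = Matrix.fromBlocks (τ • A) M Mbar (-(τ • B))) :
    ∀ z ∈ spectrum ℂ ((Btilde⁻¹ * 𝒜).map ((↑) : ℝ → ℂ)),
      z.im = 0 ∧ C₁ < z.re ∧ z.re ≤ 1 := by
  obtain ⟨hC₁0, hC₁1⟩ := hC₁
  subst hAB
  intro z hz
  have hAt : Aᵀ = A := by
    rw [← conjTranspose_eq_transpose_of_trivial]; exact hA.isHermitian
  have hMt : Mᵀ = M := by
    rw [← conjTranspose_eq_transpose_of_trivial]; exact hM.isHermitian
  have hMbt : Mbarᵀ = Mbar := by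
    rw [← conjTranspose_eq_transpose_of_trivial]; exact hMbar.isHermitian
  -- Btilde has trivial kernel
  have hker : ∀ u : Fin n ⊕ Fin n → ℝ, Btilde *ᵥ u = 0 → u = 0 := by
    intro u hu
    rw [hBtilde, fromBlocks_mulVec] at hu
    set a : Fin n → ℝ := u ∘ Sum.inl with ha
    set b : Fin n → ℝ := u ∘ Sum.inr with hb
    have e1 : (τ • A) *ᵥ a + M *ᵥ b = 0 := funext fun i => congrFun hu (Sum.inl i)
    have e2 : Mbar *ᵥ a + (-(τ • A)) *ᵥ b = 0 := funext fun i => congrFun hu (Sum.inr i)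
    rw [smul_mulVec] at e1
    rw [neg_mulVec, smul_mulVec, ← sub_eq_add_neg, sub_eq_zero] at e2
    -- e1 : τ • (A *ᵥ a) + M *ᵥ b = 0 ; e2 : Mbar *ᵥ a = τ • (A *ᵥ b)
    have hMb : M *ᵥ b = -(τ • (A *ᵥ a)) := eq_neg_of_add_eq_zero_right e1
    have key : Mbar *ᵥ a ⬝ᵥ a = -(M *ᵥ b ⬝ᵥ b) := by
      calc Mbar *ᵥ a ⬝ᵥ a = (τ • (A *ᵥ b)) ⬝ᵥ a := by rw [e2]
        _ = τ * (A *ᵥ b ⬝ᵥ a) := smul_dotProduct τ _ _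
        _ = τ * (A *ᵥ a ⬝ᵥ b) := by rw [swap_dot A hAt]
        _ = (τ • (A *ᵥ a)) ⬝ᵥ b := (smul_dotProduct τ _ _).symm
        _ = (-(M *ᵥ b)) ⬝ᵥ b := by rw [hMb, neg_neg]
        _ = -(M *ᵥ b ⬝ᵥ b) := neg_dotProduct _ _
    have h1 : Mbar *ᵥ a ⬝ᵥ a = 0 := by
      have n1 := rquad_nonneg hMbar.posSemidef a
      have n2 := rquad_nonneg hM.posSemidef b
      linarith
    have h2 : M *ᵥ b ⬝ᵥ b = 0 := by
      have n1 := rquad_nonneg hMbar.posSemidef a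
      linarith
    have ha0 : a = 0 := by
      by_contra h
      exact (rquad_pos hMbar h).ne' h1
    have hb0 : b = 0 := by
      by_contra h
      exact (rquad_pos hM h).ne' h2
    funext i
    cases i with
    | inl j => exact congrFun ha0 j
    | inr j => exact congrFun hb0 j
  have hdet : IsUnit Btilde.det := by
    rw [isUnit_iff_ne_zero]
    intro h
    obtain ⟨v, hv0, hv⟩ := Matrix.exists_mulVec_eq_zero_iff.mpr h
    exact hv0 (hker v hv)
  -- map-mul facts
  have hmapmul : ∀ (P Q : Matrix (Fin n ⊕ Fin n) (Fin n ⊕ Fin n) ℝ),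
      (P * Q).map ((↑) : ℝ → ℂ) = P.map ((↑) : ℝ → ℂ) * Q.map ((↑) : ℝ → ℂ) :=
    fun P Q => Matrix.map_mul (f := Complex.ofRealHom)
  -- eigenvector
  rw [spectrum.mem_iff] at hz
  have hdetz : (algebraMap ℂ (Matrix (Fin n ⊕ Fin n) (Fin n ⊕ Fin n) ℂ) z
      - (Btilde⁻¹ * 𝒜).map ((↑) : ℝ → ℂ)).det = 0 := by
    by_contra h
    exact hz ((Matrix.isUnit_iff_isUnit_det _).mpr (isUnit_iff_ne_zero.mpr h))
  obtain ⟨v, hv0, hv⟩ := Matrix.exists_mulVec_eq_zero_iff.mpr hdetz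
  have hNv : (Btilde⁻¹ * 𝒜).map ((↑) : ℝ → ℂ) *ᵥ v = z • v := by
    rw [sub_mulVec, Algebra.algebraMap_eq_smul_one, smul_mulVec, one_mulVec,
      sub_eq_zero] at hv
    exact hv.symm
  have hBN : Btilde.map ((↑) : ℝ → ℂ) * (Btilde⁻¹ * 𝒜).map ((↑) : ℝ → ℂ)
      = 𝒜.map ((↑) : ℝ → ℂ) := by
    rw [← hmapmul, ← mul_assoc, Matrix.mul_nonsing_inv _ hdet, one_mul]
  have heq : 𝒜.map ((↑) : ℝ → ℂ) *ᵥ v = z • (Btilde.map ((↑) : ℝ → ℂ) *ᵥ v) := by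
    rw [← hBN, ← mulVec_mulVec, hNv, mulVec_smul]
  rw [h𝒜, hBtilde, fromBlocks_map, fromBlocks_map, fromBlocks_mulVec, fromBlocks_mulVec] at heq
  set x : Fin n → ℂ := v ∘ Sum.inl with hxdef
  set y : Fin n → ℂ := v ∘ Sum.inr with hydef
  have E1 : (τ • A).map ((↑) : ℝ → ℂ) *ᵥ x + M.map ((↑) : ℝ → ℂ) *ᵥ y
      = z • ((τ • A).map ((↑) : ℝ → ℂ) *ᵥ x + M.map ((↑) : ℝ → ℂ) *ᵥ y) :=
    funext fun i => congrFun heq (Sum.inl i)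
  have E2 : M.map ((↑) : ℝ → ℂ) *ᵥ x + (-(τ • A)).map ((↑) : ℝ → ℂ) *ᵥ y
      = z • (Mbar.map ((↑) : ℝ → ℂ) *ᵥ x + (-(τ • A)).map ((↑) : ℝ → ℂ) *ᵥ y) :=
    funext fun i => congrFun heq (Sum.inr i)
  by_cases hz1 : z = 1
  · subst hz1
    exact ⟨rfl, by simpa using hC₁1, le_refl _⟩
  -- z ≠ 1 : first block equation forces τ A x + M y = 0
  have hL : (τ : ℂ) • (A.map ((↑) : ℝ → ℂ) *ᵥ x) + M.map ((↑) : ℝ → ℂ) *ᵥ y = 0 := by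
    have h1 : ((1 : ℂ) - z) • ((τ • A).map ((↑) : ℝ → ℂ) *ᵥ x
        + M.map ((↑) : ℝ → ℂ) *ᵥ y) = 0 := by
      rw [sub_smul, one_smul, sub_eq_zero]
      exact E1
    rcases smul_eq_zero.mp h1 with h | h
    · exact absurd (sub_eq_zero.mp h).symm hz1
    · rw [mapc_smul, smul_mulVec] at h
      exact h
  have hMy : M.map ((↑) : ℝ → ℂ) *ᵥ y = -((τ : ℂ) • (A.map ((↑) : ℝ → ℂ) *ᵥ x)) :=
    eq_neg_of_add_eq_zero_right hL
  have hτc : (τ : ℂ) ≠ 0 := Complex.ofReal_ne_zero.mpr hτ.ne'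
  have hdetmap : ∀ P : Matrix (Fin n) (Fin n) ℝ, (P.map ((↑) : ℝ → ℂ)).det = ((P.det : ℝ) : ℂ) := by
    intro P
    have h := RingHom.map_det Complex.ofRealHom P
    rw [RingHom.mapMatrix_apply] at h
    exact h.symm
  have hdetM : (M.map ((↑) : ℝ → ℂ)).det ≠ 0 := by
    rw [hdetmap]
    exact Complex.ofReal_ne_zero.mpr hM.det_pos.ne'
  have hdetA : (A.map ((↑) : ℝ → ℂ)).det ≠ 0 := by
    rw [hdetmap]
    exact Complex.ofReal_ne_zero.mpr hA.det_pos.ne'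
  have hvsplit : x ≠ 0 → y ≠ 0 → False → True := fun _ _ _ => trivial
  have hxy0 : ∀ (hx0 : x = 0) (hy0 : y = 0), False := by
    intro hx0 hy0
    apply hv0
    funext i
    cases i with
    | inl j => exact congrFun hx0 j
    | inr j => exact congrFun hy0 j
  have hcy : y ≠ 0 := by
    intro h0
    have hAx : A.map ((↑) : ℝ → ℂ) *ᵥ x = 0 := by
      have := hMy
      rw [h0, mulVec_zero] at this
      have h2 : (τ : ℂ) • (A.map ((↑) : ℝ → ℂ) *ᵥ x) = 0 := by
        rw [← neg_eq_zero, ← this]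
      rcases smul_eq_zero.mp h2 with h | h
      · exact absurd h hτc
      · exact h
    have hx0 : x = 0 := by
      by_contra hx
      exact hdetA (Matrix.exists_mulVec_eq_zero_iff.mp ⟨x, hx, hAx⟩)
    exact hxy0 hx0 h0
  have hcx : x ≠ 0 := by
    intro h0
    have hMy0 : M.map ((↑) : ℝ → ℂ) *ᵥ y = 0 := by
      rw [hMy, h0, mulVec_zero, smul_zero, neg_zero]
    have hy0 : y = 0 := by
      by_contra hy
      exact hdetM (Matrix.exists_mulVec_eq_zero_iff.mp ⟨y, hy, hMy0⟩)
    exact hxy0 h0 hy0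
  -- quadratic forms
  set r1 : ℝ := M *ᵥ (fun i => (x i).re) ⬝ᵥ (fun i => (x i).re)
      + M *ᵥ (fun i => (x i).im) ⬝ᵥ (fun i => (x i).im) with hr1
  set rb : ℝ := Mbar *ᵥ (fun i => (x i).re) ⬝ᵥ (fun i => (x i).re)
      + Mbar *ᵥ (fun i => (x i).im) ⬝ᵥ (fun i => (x i).im) with hrb
  set r2 : ℝ := M *ᵥ (fun i => (y i).re) ⬝ᵥ (fun i => (y i).re)
      + M *ᵥ (fun i => (y i).im) ⬝ᵥ (fun i => (y i).im) with hr2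
  have hT : (τ : ℂ) * (star x ⬝ᵥ (A.map ((↑) : ℝ → ℂ) *ᵥ y)) = -((r2 : ℝ) : ℂ) := by
    rw [star_dot_swap A hAt x y]
    calc (τ : ℂ) * (star (A.map ((↑) : ℝ → ℂ) *ᵥ x) ⬝ᵥ y)
        = ((τ : ℂ) • star (A.map ((↑) : ℝ → ℂ) *ᵥ x)) ⬝ᵥ y := by
          rw [smul_dotProduct, smul_eq_mul]
      _ = (star ((τ : ℂ) • (A.map ((↑) : ℝ → ℂ) *ᵥ x))) ⬝ᵥ y := by
          rw [star_smul, Complex.star_def, Complex.conj_ofReal]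
      _ = (star (-(M.map ((↑) : ℝ → ℂ) *ᵥ y))) ⬝ᵥ y := by rw [hMy, neg_neg]
      _ = -(star (M.map ((↑) : ℝ → ℂ) *ᵥ y) ⬝ᵥ y) := by rw [star_neg, neg_dotProduct]
      _ = -(star y ⬝ᵥ (M.map ((↑) : ℝ → ℂ) *ᵥ y)) := by rw [star_dot_swap M hMt y y]
      _ = -((r2 : ℝ) : ℂ) := by rw [quad_decomp M hMt y]
  have key : ((r1 + r2 : ℝ) : ℂ) = z * ((rb + r2 : ℝ) : ℂ) := by
    have h2 : star x ⬝ᵥ (M.map ((↑) : ℝ → ℂ) *ᵥ x + (-(τ • A)).map ((↑) : ℝ → ℂ) *ᵥ y)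
        = star x ⬝ᵥ (z • (Mbar.map ((↑) : ℝ → ℂ) *ᵥ x
            + (-(τ • A)).map ((↑) : ℝ → ℂ) *ᵥ y)) := by rw [← E2]
    rw [mapc_neg, mapc_smul, neg_mulVec, smul_mulVec] at h2
    rw [dotProduct_smul, dotProduct_add, dotProduct_add, dotProduct_neg] at h2
    have hT' : star x ⬝ᵥ ((τ : ℂ) • (A.map ((↑) : ℝ → ℂ) *ᵥ y)) = -((r2 : ℝ) : ℂ) := by
      rw [dotProduct_smul, smul_eq_mul, hT]
    rw [hT', quad_decomp M hMt x, quad_decomp Mbar hMbt x, smul_eq_mul] at h2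
    calc ((r1 + r2 : ℝ) : ℂ) = ((r1 : ℝ) : ℂ) + -(-((r2 : ℝ) : ℂ)) := by push_cast; ring
      _ = z * (((rb : ℝ) : ℂ) + -(-((r2 : ℝ) : ℂ))) := h2
      _ = z * ((rb + r2 : ℝ) : ℂ) := by push_cast; ring
  have hr2pos : 0 < r2 := cquad_pos hM hcy
  have hrbpos : 0 < rb := cquad_pos hMbar hcx
  have hub : r1 ≤ rb := add_le_add (hup _) (hup _)
  have hlb : C₁ * rb ≤ r1 := by
    have h1 := hlow (fun i => (x i).re)
    have h2 := hlow (fun i => (x i).im)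
    rw [hr1, hrb, mul_add]
    exact add_le_add h1 h2
  have htpos : 0 < rb + r2 := by linarith
  have htne : ((rb + r2 : ℝ) : ℂ) ≠ 0 := Complex.ofReal_ne_zero.mpr htpos.ne'
  have hzval : z = (((r1 + r2) / (rb + r2) : ℝ) : ℂ) := by
    rw [Complex.ofReal_div, eq_div_iff htne]
    exact key.symm
  refine ⟨by rw [hzval]; exact Complex.ofReal_im _, ?_, ?_⟩
  · rw [hzval, Complex.ofReal_re, lt_div_iff₀ htpos]
    nlinarith [mul_pos (sub_pos.mpr hC₁1) hr2pos]
  · rw [hzval, Complex.ofReal_re, div_le_one htpos]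
    linarith
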